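/- Let f : ℝ → ℝ be continuous and T > 0. Let M be the running maximum of f on [0,T], extended constantly outside [0,T], with Lebesgue–Stieltjes measure μ_M. Then for every t ∈ [0,T]: ∫_{(0,t]} f(s) dμ_M(s) = ( M(t)² − M(0)² ) / 2. -/

import Mathlib

open MeasureTheory Set

noncomputable def runMax (f : ℝ → ℝ) (T t : ℝ) : ℝ :=
  sSup (f '' Set.Icc (0:ℝ) (max 0 (min t T)))

section aux
variable {f : ℝ → ℝ} {T : ℝ}

lemma rm_bdd (hf : Continuous f) (a b : ℝ) : BddAbove (f '' Icc a b) :=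
  (isCompact_Icc.image hf).bddAbove

lemma rm_mono (hf : Continuous f) : Monotone (runMax f T) := by
  intro u v huv
  refine csSup_le_csSup (rm_bdd hf _ _) ?_
    (image_mono (Icc_subset_Icc le_rfl (max_le_max le_rfl (min_le_min huv le_rfl))))
  exact (nonempty_Icc.2 (le_max_left _ _)).image f

lemma rm_eq (s : ℝ) (h0 : 0 ≤ s) (hsT : s ≤ T) :
    runMax f T s = sSup (f '' Icc 0 s) := by
  simp [runMax, min_eq_left hsT, max_eq_right h0]

lemma rm_ge (hf : Continuous f) {s : ℝ} (h0 : 0 ≤ s) (hsT : s ≤ T) :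
    f s ≤ runMax f T s := by
  rw [rm_eq s h0 hsT]
  exact le_csSup (rm_bdd hf _ _) ⟨s, ⟨h0, le_rfl⟩, rfl⟩

lemma rm_atom (hf : Continuous f) (μM : Measure ℝ)
    (hμM : ∀ a b : ℝ, a ≤ b →
      μM (Set.Ioc a b) = ENNReal.ofReal (runMax f T b - runMax f T a))
    {u : ℝ} (hu0 : 0 < u) (huT : u ≤ T) : μM {u} = 0 := by
  have key : ∀ c : ℝ, 0 < c → μM {u} ≤ ENNReal.ofReal c := by
    intro c hc
    obtain ⟨ε, hε, hball⟩ := Metric.continuousAt_iff.mp hf.continuousAt (c/2) (by linarith)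
    set η := min (ε/2) (u/2) with hη_def
    have hηpos : 0 < η := lt_min (by linarith) (by linarith)
    have hηε : η < ε := lt_of_le_of_lt (min_le_left _ _) (by linarith)
    have hηu : η < u := lt_of_le_of_lt (min_le_right _ _) (by linarith)
    have h1 : runMax f T u ≤ runMax f T (u - η) + c := by
      rw [rm_eq u hu0.le huT, rm_eq (u - η) (by linarith) (by linarith)]
      refine csSup_le (((nonempty_Icc.2 hu0.le)).image f) ?_
      rintro x ⟨v, ⟨hv0, hvu⟩, rfl⟩
      by_cases hv : v ≤ u - η
      · have := le_csSup (rm_bdd hf 0 (u-η)) ⟨v, ⟨hv0, hv⟩, rfl⟩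
        linarith
      · push_neg at hv
        have h2 : dist v u < ε := by
          rw [Real.dist_eq, abs_lt]; constructor <;> linarith
        have h3 : dist (u - η) u < ε := by
          rw [Real.dist_eq, abs_lt]; constructor <;> linarith
        have b2 := hball h2
        have b3 := hball h3
        rw [Real.dist_eq, abs_lt] at b2 b3
        have h4 : f (u - η) ≤ sSup (f '' Icc 0 (u - η)) :=
          le_csSup (rm_bdd hf 0 (u-η)) ⟨u - η, ⟨by linarith, le_rfl⟩, rfl⟩
        linarith [b2.1, b2.2, b3.1, b3.2]
    have h2 : μM {u} ≤ μM (Ioc (u - η) u) := by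
      apply measure_mono
      intro x hx
      simp only [mem_singleton_iff] at hx
      subst hx
      exact ⟨by linarith, le_rfl⟩
    rw [hμM _ _ (by linarith)] at h2
    exact h2.trans (ENNReal.ofReal_le_ofReal (by linarith))
  refine le_antisymm ?_ zero_le
  refine ENNReal.le_of_forall_pos_le_add fun c hc _ => ?_
  simpa using key c (by exact_mod_cast hc)

lemma rm_null (hf : Continuous f) (μM : Measure ℝ)
    (hμM : ∀ a b : ℝ, a ≤ b →
      μM (Set.Ioc a b) = ENNReal.ofReal (runMax f T b - runMax f T a))
    {t : ℝ} (ht : t ∈ Icc (0:ℝ) T) :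
    μM {s | s ∈ Ioc (0:ℝ) t ∧ f s ≠ runMax f T s} = 0 := by
  set V : Set ℝ := ⋃ (p : ℚ) (q : ℚ) (_ : μM (Ioc (p:ℝ) (q:ℝ)) = 0), Ioc (p:ℝ) (q:ℝ)
    with hV_def
  have hV : μM V = 0 :=
    measure_iUnion_null fun p => measure_iUnion_null fun q =>
      measure_iUnion_null fun h => h
  refine measure_mono_null ?_ hV
  rintro s ⟨⟨hs0, hst⟩, hne⟩
  have hsT : s ≤ T := hst.trans ht.2
  have hlt : f s < runMax f T s := lt_of_le_of_ne (rm_ge hf hs0.le hsT) hne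
  -- maximum is attained
  obtain ⟨v, hvmem, hvmax⟩ :=
    isCompact_Icc.exists_isMaxOn (nonempty_Icc.2 hs0.le) hf.continuousOn
  have hMs : runMax f T s = f v := by
    rw [rm_eq s hs0.le hsT]
    refine le_antisymm (csSup_le ((nonempty_Icc.2 hs0.le).image f) ?_)
      (le_csSup (rm_bdd hf _ _) ⟨v, hvmem, rfl⟩)
    rintro x ⟨w, hw, rfl⟩
    exact hvmax hw
  -- continuity: near s, f < M s
  obtain ⟨δ, hδ, hball⟩ := Metric.continuousAt_iff.mp hf.continuousAt
    (runMax f T s - f s) (by linarith)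
  have hnear : ∀ w : ℝ, s - δ < w → w < s + δ → f w < runMax f T s := by
    intro w hw1 hw2
    have : dist w s < δ := by rw [Real.dist_eq, abs_lt]; constructor <;> linarith
    have := hball this
    rw [Real.dist_eq, abs_lt] at this
    linarith [this.1, this.2]
  have hvle : v ≤ s - δ := by
    by_contra h
    push_neg at h
    have := hnear v h (by linarith [hvmem.2])
    rw [hMs] at this; exact lt_irrefl _ this
  -- choose rationals
  obtain ⟨p, hp1, hp2⟩ := exists_rat_btwn (show max (s - δ) 0 < s from
    max_lt (by linarith) hs0)
  obtain ⟨q, hq1, hq2⟩ := exists_rat_btwn (show s < s + δ by linarith)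
  have hp0 : (0:ℝ) < p := lt_of_le_of_lt (le_max_right _ _) hp1
  have hpδ : s - δ < p := lt_of_le_of_lt (le_max_left _ _) hp1
  have hpT : (p:ℝ) ≤ T := le_trans (le_of_lt (hp2.trans_le hsT)) le_rfl
  -- M p = M s
  have hMp : runMax f T (p:ℝ) = runMax f T s := by
    refine le_antisymm (rm_mono hf hp2.le) ?_
    rw [hMs, rm_eq (p:ℝ) hp0.le hpT]
    exact le_csSup (rm_bdd hf _ _) ⟨v, ⟨hvmem.1, by linarith⟩, rfl⟩
  -- M q ≤ M p
  have hMq : runMax f T (q:ℝ) ≤ runMax f T (p:ℝ) := by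
    have hq0 : (0:ℝ) ≤ max 0 (min (q:ℝ) T) := le_max_left _ _
    show sSup (f '' Icc 0 (max 0 (min (q:ℝ) T))) ≤ _
    refine csSup_le ((nonempty_Icc.2 hq0).image f) ?_
    rintro x ⟨w, ⟨hw0, hwq⟩, rfl⟩
    by_cases hw : w ≤ (p:ℝ)
    · rw [rm_eq (p:ℝ) hp0.le hpT]
      exact le_csSup (rm_bdd hf _ _) ⟨w, ⟨hw0, hw⟩, rfl⟩
    · push_neg at hw
      have hwub : w < s + δ := by
        have h5 : max 0 (min (q:ℝ) T) ≤ (q:ℝ) := max_le (by linarith) (min_le_left _ _)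
        linarith [hwq.trans h5]
      have := hnear w (by linarith) hwub
      rw [hMp]
      linarith
  have hμ0 : μM (Ioc ((p:ℝ)) ((q:ℝ))) = 0 := by
    rw [hμM _ _ (by linarith [hp2, hq1] : (p:ℝ) ≤ (q:ℝ))]
    rw [ENNReal.ofReal_eq_zero]
    linarith
  exact mem_iUnion.2 ⟨p, mem_iUnion.2 ⟨q, mem_iUnion.2 ⟨hμ0, ⟨hp2, hq1.le⟩⟩⟩⟩

end aux


lemma stieltjes_self_integral (M : ℝ → ℝ) (hmono : Monotone M) (μM : Measure ℝ)
    (hμM : ∀ a b : ℝ, a ≤ b → μM (Set.Ioc a b) = ENNReal.ofReal (M b - M a))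
    (t : ℝ) (ht0 : 0 ≤ t)
    (hatom : ∀ x ∈ Set.Ioc (0:ℝ) t, μM {x} = 0) :
    ∫ x in Set.Ioc (0:ℝ) t, M x ∂μM = (M t ^ 2 - M 0 ^ 2) / 2 := by
  have hMm : Measurable M := hmono.measurable
  have hM0t : M 0 ≤ M t := hmono ht0
  haveI hfin : IsFiniteMeasure (μM.restrict (Set.Ioc 0 t)) := by
    constructor
    rw [Measure.restrict_apply_univ, hμM 0 t ht0]
    exact ENNReal.ofReal_lt_top
  set A := ∫⁻ x in Set.Ioc (0:ℝ) t, ENNReal.ofReal (M t - M x) ∂μM with hA_def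
  have hIoi : ∀ x ∈ Set.Ioc (0:ℝ) t,
      (μM.restrict (Set.Ioc 0 t)) (Set.Ioi x) = ENNReal.ofReal (M t - M x) := by
    intro x hx
    rw [Measure.restrict_apply measurableSet_Ioi]
    have he : Set.Ioi x ∩ Set.Ioc 0 t = Set.Ioc x t := by
      ext y
      simp only [Set.mem_inter_iff, Set.mem_Ioi, Set.mem_Ioc]
      constructor
      · rintro ⟨h1, _, h3⟩; exact ⟨h1, h3⟩
      · rintro ⟨h1, h2⟩; exact ⟨h1, hx.1.trans h1, h2⟩
    rw [he, hμM x t hx.2]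
  have hlt_meas : MeasurableSet {p : ℝ × ℝ | p.1 < p.2} :=
    measurableSet_lt measurable_fst measurable_snd
  set μ' := μM.restrict (Set.Ioc 0 t) with hμ'_def
  have hprodlt : (μ'.prod μ') {p : ℝ × ℝ | p.1 < p.2} = A := by
    rw [Measure.prod_apply hlt_meas]
    have hpre : ∀ x : ℝ, (Prod.mk x ⁻¹' {p : ℝ × ℝ | p.1 < p.2}) = Set.Ioi x :=
      fun x => rfl
    simp_rw [hpre]
    rw [hμ'_def]
    refine setLIntegral_congr_fun measurableSet_Ioc ?_
    intro x hx
    exact hIoi x hx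
  have hprodgt : (μ'.prod μ') {p : ℝ × ℝ | p.2 < p.1} = A := by
    have hs : {p : ℝ × ℝ | p.2 < p.1} = Prod.swap ⁻¹' {p : ℝ × ℝ | p.1 < p.2} := rfl
    rw [hs, ← Measure.map_apply measurable_swap hlt_meas, Measure.prod_swap]
    exact hprodlt
  have hdiag_meas : MeasurableSet {p : ℝ × ℝ | p.1 = p.2} :=
    measurableSet_eq_fun measurable_fst measurable_snd
  have hdiag : (μ'.prod μ') {p : ℝ × ℝ | p.1 = p.2} = 0 := by
    rw [Measure.prod_apply hdiag_meas]
    have h0 : ∀ x : ℝ, μ' (Prod.mk x ⁻¹' {p : ℝ × ℝ | p.1 = p.2}) = 0 := by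
      intro x
      have hpre : (Prod.mk x ⁻¹' {p : ℝ × ℝ | p.1 = p.2}) = {x} := by
        ext y; simp [eq_comm]
      rw [hpre, hμ'_def, Measure.restrict_apply (measurableSet_singleton x)]
      by_cases hx : x ∈ Set.Ioc (0:ℝ) t
      · exact measure_mono_null Set.inter_subset_left (hatom x hx)
      · rw [Set.singleton_inter_eq_empty.mpr hx, measure_empty]
    simp_rw [h0]
    simp
  have huniv : (μ'.prod μ') Set.univ
      = ENNReal.ofReal (M t - M 0) * ENNReal.ofReal (M t - M 0) := by
    rw [← Set.univ_prod_univ, Measure.prod_prod, hμ'_def, Measure.restrict_apply_univ,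
      hμM 0 t ht0]
  have hd1 : Disjoint {p : ℝ × ℝ | p.1 < p.2} {p : ℝ × ℝ | p.2 < p.1} := by
    rw [Set.disjoint_left]
    intro p h1 h2
    simp only [Set.mem_setOf_eq] at h1 h2
    exact absurd h2 (not_lt.2 h1.le)
  have hd2 : Disjoint ({p : ℝ × ℝ | p.1 < p.2} ∪ {p : ℝ × ℝ | p.2 < p.1})
      {p : ℝ × ℝ | p.1 = p.2} := by
    rw [Set.disjoint_left]
    rintro p (h | h) h2 <;> simp only [Set.mem_setOf_eq] at h h2
    · exact absurd h2 (ne_of_lt h)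
    · exact absurd h2 (ne_of_gt h)
  have hu : ({p : ℝ × ℝ | p.1 < p.2} ∪ {p : ℝ × ℝ | p.2 < p.1})
      ∪ {p : ℝ × ℝ | p.1 = p.2} = Set.univ := by
    ext p
    simp only [Set.mem_union, Set.mem_setOf_eq, Set.mem_univ, iff_true]
    rcases lt_trichotomy p.1 p.2 with h | h | h
    · exact Or.inl (Or.inl h)
    · exact Or.inr h
    · exact Or.inl (Or.inr h)
  have hsplit : A + A = ENNReal.ofReal (M t - M 0) * ENNReal.ofReal (M t - M 0) := by
    rw [← huniv, ← hu, measure_union hd2 hdiag_meas,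
      measure_union hd1 (measurableSet_lt measurable_snd measurable_fst),
      hprodlt, hprodgt, hdiag, add_zero]
  have hAne : A ≠ ⊤ := by
    intro h
    have : (ENNReal.ofReal (M t - M 0) * ENNReal.ofReal (M t - M 0)) = ⊤ := by
      rw [← hsplit, h]; simp
    exact (ENNReal.mul_ne_top ENNReal.ofReal_ne_top ENNReal.ofReal_ne_top) this
  have hAtoReal : 2 * A.toReal = (M t - M 0) * (M t - M 0) := by
    have hc := congrArg ENNReal.toReal hsplit
    rw [ENNReal.toReal_add hAne hAne, ENNReal.toReal_mul,
      ENNReal.toReal_ofReal (by linarith)] at hc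
    linarith
  have hMint : Integrable M μ' := by
    refine Integrable.mono' (integrable_const (max |M 0| |M t|))
      hMm.aestronglyMeasurable ?_
    rw [hμ'_def, ae_restrict_iff' measurableSet_Ioc]
    refine Filter.Eventually.of_forall fun x hx => ?_
    rw [Real.norm_eq_abs, abs_le]
    constructor
    · have h1 : M 0 ≤ M x := hmono hx.1.le
      have h2 := neg_abs_le (M 0)
      have h3 := le_max_left |M 0| |M t|
      linarith
    · have h1 : M x ≤ M t := hmono hx.2
      have h2 := le_abs_self (M t)
      have h3 := le_max_right |M 0| |M t|
      linarith
  have hnn : (0:ℝ→ℝ) ≤ᵐ[μ'] fun x => M t - M x := by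
    rw [hμ'_def]
    refine (ae_restrict_iff' measurableSet_Ioc).2
      (Filter.Eventually.of_forall fun x hx => ?_)
    have : M x ≤ M t := hmono hx.2
    simp only [Pi.zero_apply]
    linarith
  have h2 : ∫ x, (M t - M x) ∂μ' = A.toReal := by
    rw [integral_eq_lintegral_of_nonneg_ae hnn
      (measurable_const.sub hMm).aestronglyMeasurable]
  have h3 : ∫ x, (M t - M x) ∂μ' = (M t - M 0) * (M t) - ∫ x, M x ∂μ' := by
    rw [integral_sub (integrable_const _) hMint, integral_const, hμ'_def, measureReal_def,
      Measure.restrict_apply_univ, hμM 0 t ht0, ENNReal.toReal_ofReal (by linarith),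
      smul_eq_mul]
  have key : ∫ x, M x ∂μ' = (M t - M 0) * M t - A.toReal := by
    rw [← h2, h3]; ring
  show ∫ x, M x ∂μ' = _
  rw [key]
  linear_combination (-1/2 : ℝ) * hAtoReal


/-- `∫_{(0,t]} f(s) dM(s) = (M(t)² − M(0)²)/2` for the running maximum `M` of a
continuous function `f` (quadratic-functional Example of Section 4). -/
theorem integral_self_wrt_runMax
    (f : ℝ → ℝ) (hf : Continuous f) (T : ℝ) (hT : 0 < T)
    (μM : Measure ℝ)
    (hμM : ∀ a b : ℝ, a ≤ b →
      μM (Set.Ioc a b) = ENNReal.ofReal (runMax f T b - runMax f T a)) :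
    ∀ t ∈ Set.Icc (0:ℝ) T,
      ∫ s in Set.Ioc (0:ℝ) t, f s ∂μM
        = ((runMax f T t) ^ 2 - (runMax f T 0) ^ 2) / 2 := by
  rintro t ⟨ht0, htT⟩
  have h1 : ∫ s in Set.Ioc (0:ℝ) t, f s ∂μM
      = ∫ s in Set.Ioc (0:ℝ) t, runMax f T s ∂μM := by
    refine integral_congr_ae ?_
    rw [Filter.EventuallyEq, ae_restrict_iff' measurableSet_Ioc, ae_iff]
    refine measure_mono_null ?_ (rm_null hf μM hμM ⟨ht0, htT⟩)
    intro x hx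
    simp only [Set.mem_setOf_eq, not_forall] at hx
    obtain ⟨hmem, hne⟩ := hx
    exact ⟨hmem, hne⟩
  rw [h1]
  exact stieltjes_self_integral (runMax f T) (rm_mono hf) μM hμM t ht0
    (fun x hx => rm_atom hf μM hμM hx.1 (hx.2.trans htT))
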